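/- Let n be a positive integer, a ∈ Mat_n(ℂ), and let f, g : ℂ → Mat_n(ℂ) be differentiable functions satisfying f'(x) = −f² + g − (x/2)·I and g'(x) = 2fg + a for all x ∈ ℂ. Then y = f is twice differentiable and satisfies the matrix Painlevé-2 equation P₂¹: y'' = [y, y'] + 2y³ + x y + (a − (1/2)·I). -/

import Mathlib

attribute [local instance] Matrix.linftyOpNormedAddCommGroup Matrix.linftyOpNormedSpace
attribute [local instance] Matrix.linftyOpNormedRing Matrix.linftyOpNormedAlgebra

/-- If `f, g` solve `f' = −f² + g − (x/2)I`, `g' = 2fg + a`, then `y = f`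
satisfies the matrix Painlevé-2 equation P₂¹: `y'' = [y, y'] + 2y³ + xy + (a − (1/2)I)`. -/
theorem matrix_P21_from_degeneration (n : ℕ) (hn : 0 < n)
    (a : Matrix (Fin n) (Fin n) ℂ)
    (f g : ℂ → Matrix (Fin n) (Fin n) ℂ)
    (hf : ∀ x : ℂ, HasDerivAt f (-(f x) ^ 2 + g x - (x / 2) • 1) x)
    (hg : ∀ x : ℂ, HasDerivAt g (2 * (f x * g x) + a) x) :
    ∀ x : ℂ, HasDerivAt (deriv f)
      ((f x * deriv f x - deriv f x * f x) + 2 * (f x) ^ 3 + x • f x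
        + (a - (1 / 2 : ℂ) • 1)) x := by
  have hd : deriv f = fun x => -(f x) ^ 2 + g x - (x / 2) • 1 := funext fun x => (hf x).deriv
  intro x
  have hsq : HasDerivAt (fun x => -(f x) ^ 2)
      (-(((-(f x) ^ 2 + g x - (x / 2) • 1) * f x) + f x * (-(f x) ^ 2 + g x - (x / 2) • 1))) x := by
    have := ((hf x).mul (hf x)).neg
    simp only [sq] at this ⊢
    exact this
  have hlin : HasDerivAt (fun x : ℂ => (x / 2) • (1 : Matrix (Fin n) (Fin n) ℂ))
      ((1 / 2 : ℂ) • 1) x := by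
    have := ((hasDerivAt_id x).div_const 2).smul_const (1 : Matrix (Fin n) (Fin n) ℂ)
    simp only [id, one_div] at this ⊢
    exact this
  have h1 := (hsq.add (hg x)).sub hlin
  rw [hd]
  refine h1.congr_deriv ?_
  simp only
  simp only [mul_add, add_mul, mul_sub, sub_mul, mul_smul_comm, smul_mul_assoc, mul_one, one_mul,
    mul_neg, neg_mul, sq, pow_succ, pow_zero, mul_assoc, two_mul]
  module
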